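/- Let τ be purely imaginary (τ = is, s ∈ ℝ, s ≠ 0) and let k, h > 0 be real. Then the quantity 1 - (kh)²/(2 + ikh(τ + τ⁻¹)) appearing in the 1D HDG dispersion relation is real, and if kh is sufficiently small it lies in [-1, 1], so the discrete wavenumber k^h = (1/h)·arccos(1 - (kh)²/(2 + ikh(τ+τ⁻¹))) is real (Im k^h = 0). -/

import Mathlib

open Complex

/-- Principal branch of the complex arccosine, `arccos z = -i log(z + i√(1-z²))`. -/
noncomputable def carccos (z : ℂ) : ℂ :=
  -I * Complex.log (z + I * (1 - z ^ 2) ^ ((1 : ℂ) / 2))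

lemma carccos_real_im_zero (z : ℝ) (hz : z ∈ Set.Icc (-1 : ℝ) 1) :
    (carccos (z : ℂ)).im = 0 := by
  obtain ⟨hz1, hz2⟩ := hz
  have hnn : (0 : ℝ) ≤ 1 - z ^ 2 := by nlinarith
  have h1 : (1 : ℂ) - (z : ℂ) ^ 2 = ((1 - z ^ 2 : ℝ) : ℂ) := by push_cast; ring
  have h2 : ((1 : ℂ)) / 2 = (((1 : ℝ) / 2 : ℝ) : ℂ) := by push_cast; ring
  have h3 : ((1 - z ^ 2 : ℝ) : ℂ) ^ (((1 : ℝ) / 2 : ℝ) : ℂ)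
      = (((1 - z ^ 2) ^ ((1 : ℝ) / 2) : ℝ) : ℂ) := (Complex.ofReal_cpow hnn _).symm
  have hr : (1 - z ^ 2) ^ ((1 : ℝ) / 2) = Real.sqrt (1 - z ^ 2) :=
    (Real.sqrt_eq_rpow _).symm
  set r : ℝ := Real.sqrt (1 - z ^ 2) with hrdef
  have hw : (z : ℂ) + I * ((1 : ℂ) - (z : ℂ) ^ 2) ^ ((1 : ℂ) / 2)
      = ⟨z, r⟩ := by
    rw [h1, h2, h3, hr]
    apply Complex.ext <;> simp
  have habs : ‖(⟨z, r⟩ : ℂ)‖ = 1 := by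
    rw [Complex.norm_def, Complex.normSq_mk]
    have : r * r = 1 - z ^ 2 := Real.mul_self_sqrt hnn
    rw [this]
    norm_num [show z * z + (1 - z ^ 2) = 1 by ring]
  have hlogre : (Complex.log (⟨z, r⟩ : ℂ)).re = 0 := by
    rw [Complex.log_re, habs, Real.log_one]
  unfold carccos
  rw [hw]
  simp [Complex.mul_im, hlogre]

theorem hdg_1d_no_dissipation_imaginary_tau (s : ℝ) (hs : s ≠ 0) (k h : ℝ)
    (hk : 0 < k) (hh : 0 < h) :
    (1 - ((k * h : ℂ)) ^ 2 / (2 + I * (k * h) * ((I * s) + (I * s)⁻¹))).im = 0 ∧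
    ∃ δ > 0, ∀ x : ℝ, 0 < x → x < δ →
      (1 - ((x : ℂ)) ^ 2 / (2 + I * x * ((I * s) + (I * s)⁻¹))).re ∈ Set.Icc (-1 : ℝ) 1 ∧
      ((1 / (h : ℂ)) * carccos (1 - ((x : ℂ)) ^ 2 / (2 + I * x * ((I * s) + (I * s)⁻¹)))).im
        = 0 := by
  have hsC : (s : ℂ) ≠ 0 := Complex.ofReal_ne_zero.mpr hs
  set c : ℝ := s - 1 / s with hc
  have hden : ∀ x : ℝ, (2 + I * (x : ℂ) * ((I * s) + (I * s)⁻¹)) = ((2 - x * c : ℝ) : ℂ) := by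
    intro x
    have hinv : ((I * (s : ℂ))⁻¹ : ℂ) = -I * ((s : ℂ))⁻¹ := by
      rw [mul_inv, Complex.inv_I]
    rw [hinv, hc]
    push_cast
    field_simp
    ring_nf
    rw [Complex.I_sq]
    ring
  have hreal : ∀ x : ℝ, (1 - ((x : ℂ)) ^ 2 / (2 + I * x * ((I * s) + (I * s)⁻¹)))
      = ((1 - x ^ 2 / (2 - x * c) : ℝ) : ℂ) := by
    intro x
    rw [hden x]
    push_cast
    ring
  constructor
  · have e : ((k : ℂ) * h) = ((k * h : ℝ) : ℂ) := by push_cast; ring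
    rw [e, hreal]; exact Complex.ofReal_im _
  · refine ⟨min 1 (1 / (1 + |c|)), lt_min one_pos (by positivity), ?_⟩
    intro x hx0 hxδ
    have hx1 : x < 1 := lt_of_lt_of_le hxδ (min_le_left _ _)
    have hx2 : x < 1 / (1 + |c|) := lt_of_lt_of_le hxδ (min_le_right _ _)
    have hxc : x * |c| < 1 := by
      have h1c : (0 : ℝ) < 1 + |c| := by positivity
      have h2 : x * (1 + |c|) < 1 := (lt_div_iff₀ h1c).mp hx2
      nlinarith [abs_nonneg c]
    have hle : x * c ≤ x * |c| := mul_le_mul_of_nonneg_left (le_abs_self c) hx0.le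
    have hd1 : 1 < 2 - x * c := by nlinarith
    have hdpos : (0 : ℝ) < 2 - x * c := by linarith
    have hx2lt : x ^ 2 < 2 - x * c := by nlinarith
    have hfle : 1 - x ^ 2 / (2 - x * c) ≤ 1 := by
      have : 0 ≤ x ^ 2 / (2 - x * c) := by positivity
      linarith
    have hfge : -1 ≤ 1 - x ^ 2 / (2 - x * c) := by
      have : x ^ 2 / (2 - x * c) < 1 := (div_lt_one hdpos).mpr hx2lt
      linarith
    have hmem : (1 - x ^ 2 / (2 - x * c)) ∈ Set.Icc (-1 : ℝ) 1 := ⟨hfge, hfle⟩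
    constructor
    · rw [hreal x, Complex.ofReal_re]
      exact hmem
    · have him := carccos_real_im_zero _ hmem
      have h1h : (1 / (h : ℂ)) = ((1 / h : ℝ) : ℂ) := by push_cast; ring
      rw [hreal x, h1h, Complex.mul_im, him]
      simp
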